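/- Let r > 0 and let a satisfy 0 < a ≤ r/2. For j = 0, 1, …, 5 define q_j = (2a·cos(jπ/3), 2a·sin(jπ/3)) ∈ ℝ², i.e., 6 points placed uniformly on the circle of radius 2a centered at the origin. Then every point t ∈ ℝ² with ‖t‖ ≤ r + a satisfies dist(t, q_j) ≤ r for some j ∈ {0, …, 5}. In particular, 6 sensors of sensing radius r placed at distance 2a from a station cover the entire ring Ring(r, r + a) of points at distance between r and r + a from the station (and in fact the whole disk of radius r + a). -/

import Mathlib

private lemma sq_le_imp (A B : ℝ) (hB : 0 ≤ B) (h : A^2 ≤ B^2) : A ≤ B := by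
  nlinarith

private lemma key_ineq (r a s x y c d : ℝ) (hr : 0 < r) (ha : 0 < a) (har : a ≤ r / 2)
    (hs : s^2 = x^2 + y^2) (hs0 : 0 ≤ s) (hsr : s ≤ r + a)
    (hcd : c^2 + d^2 = 4*a^2)
    (hIn : Real.sqrt 3 * a * s ≤ c*x + d*y) :
    (x - c)^2 + (y - d)^2 ≤ r^2 := by
  have h3 : (Real.sqrt 3)^2 = 3 := Real.sq_sqrt (by norm_num)
  have h32 : (3/2 : ℝ) ≤ Real.sqrt 3 := by
    nlinarith [Real.sqrt_nonneg 3]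
  have f0 : 4*a^2 - r^2 ≤ 0 := by nlinarith
  have fend : (r+a)^2 - 2*Real.sqrt 3*a*(r+a) + 4*a^2 - r^2 ≤ 0 := by
    nlinarith [mul_nonneg (mul_nonneg ha.le (sub_nonneg.mpr h32)) (by linarith : (0:ℝ) ≤ r + a)]
  have Q : s^2 - 2*Real.sqrt 3*a*s + 4*a^2 ≤ r^2 := by
    nlinarith [mul_nonneg hs0 (sub_nonneg.mpr hsr),
      mul_nonneg hs0 (neg_nonneg.mpr fend),
      mul_nonneg (sub_nonneg.mpr hsr) (neg_nonneg.mpr f0)]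
  nlinarith [hIn, Q]

private lemma pick (a x y s : ℝ) (ha : 0 < a) (hs : s^2 = x^2 + y^2) (hs0 : 0 ≤ s) :
    Real.sqrt 3 * a * s ≤ (2*a)*x + 0*y ∨
    Real.sqrt 3 * a * s ≤ a*x + (Real.sqrt 3 * a)*y ∨
    Real.sqrt 3 * a * s ≤ (-a)*x + (Real.sqrt 3 * a)*y ∨
    Real.sqrt 3 * a * s ≤ (-(2*a))*x + 0*y ∨
    Real.sqrt 3 * a * s ≤ (-a)*x + (-(Real.sqrt 3 * a))*y ∨
    Real.sqrt 3 * a * s ≤ a*x + (-(Real.sqrt 3 * a))*y := by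
  have h3 : (Real.sqrt 3)^2 = 3 := Real.sq_sqrt (by norm_num)
  have h3nn : (0:ℝ) ≤ Real.sqrt 3 := Real.sqrt_nonneg 3
  rcases le_or_gt (3*y^2) (x^2) with hcase | hcase
  · rcases le_or_gt 0 x with hx | hx
    · left
      have h1 : Real.sqrt 3 * s ≤ 2*x := sq_le_imp _ _ (by linarith) (by nlinarith)
      nlinarith [mul_le_mul_of_nonneg_left h1 ha.le]
    · right; right; right; left
      have h1 : Real.sqrt 3 * s ≤ -(2*x) := sq_le_imp _ _ (by linarith) (by nlinarith)
      nlinarith [mul_le_mul_of_nonneg_left h1 ha.le]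
  · have hxy : |x| ≤ Real.sqrt 3 * |y| := by
      refine sq_le_imp _ _ (by positivity) ?_
      rw [mul_pow, h3, sq_abs, sq_abs]; nlinarith
    have h2 : Real.sqrt 3 * s ≤ |x| + Real.sqrt 3 * |y| := by
      refine sq_le_imp _ _ (by positivity) ?_
      have eA : (Real.sqrt 3 * s)^2 = 3*s^2 := by rw [mul_pow, h3]
      nlinarith [eA, hs, h3, sq_abs x, sq_abs y,
        mul_le_mul_of_nonneg_left hxy (abs_nonneg x), abs_nonneg x, abs_nonneg y]
    have h2a := mul_le_mul_of_nonneg_left h2 ha.le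
    rcases le_or_gt 0 x with hx | hx
    · rcases le_or_gt 0 y with hy | hy
      · right; left
        rw [abs_of_nonneg hx, abs_of_nonneg hy] at h2a; nlinarith
      · right; right; right; right; right
        rw [abs_of_nonneg hx, abs_of_neg hy] at h2a; nlinarith
    · rcases le_or_gt 0 y with hy | hy
      · right; right; left
        rw [abs_of_neg hx, abs_of_nonneg hy] at h2a; nlinarith
      · right; right; right; right; left
        rw [abs_of_neg hx, abs_of_neg hy] at h2a; nlinarith

theorem stmt_5 (r a : ℝ) (hr : 0 < r) (ha : 0 < a) (har : a ≤ r / 2)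
    (q : Fin 6 → EuclideanSpace ℝ (Fin 2))
    (hq : ∀ j : Fin 6, q j = ![2 * a * Real.cos (j * Real.pi / 3),
        2 * a * Real.sin (j * Real.pi / 3)]) :
    ∀ t : EuclideanSpace ℝ (Fin 2), ‖t‖ ≤ r + a →
      ∃ j : Fin 6, dist t (q j) ≤ r := by
  intro t ht
  set x : ℝ := t 0 with hxdef
  set y : ℝ := t 1 with hydef
  set s : ℝ := ‖t‖ with hsdef
  have hs0 : 0 ≤ s := norm_nonneg t
  have hs : s^2 = x^2 + y^2 := by
    rw [hsdef, EuclideanSpace.norm_eq, Real.sq_sqrt (by positivity)]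
    simp [Fin.sum_univ_two, sq_abs]
    rfl
  have h3 : (Real.sqrt 3)^2 = 3 := Real.sq_sqrt (by norm_num)
  have e0 : q 0 = ![2*a, 0] := by
    rw [hq 0]; norm_num [show ((0:Fin 6):ℝ) = 0 by norm_num [show (0:Fin 6).val = 0 from rfl]]
  have e1 : q 1 = ![a, Real.sqrt 3 * a] := by
    rw [hq 1]
    norm_num [show ((1:Fin 6):ℝ) = 1 by norm_num [show (1:Fin 6).val = 1 from rfl],
      Real.cos_pi_div_three, Real.sin_pi_div_three]
    constructor <;> ring
  have e2 : q 2 = ![-a, Real.sqrt 3 * a] := by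
    rw [hq 2]
    have h : ((2:Fin 6):ℝ) * Real.pi / 3 = Real.pi - Real.pi/3 := by
      rw [show ((2:Fin 6):ℝ) = 2 by norm_num [show (2:Fin 6).val = 2 from rfl]]; ring
    rw [h, Real.cos_pi_sub, Real.sin_pi_sub, Real.cos_pi_div_three, Real.sin_pi_div_three]
    norm_num; constructor <;> ring
  have e3 : q 3 = ![-(2*a), 0] := by
    rw [hq 3]
    have h : ((3:Fin 6):ℝ) * Real.pi / 3 = Real.pi := by
      rw [show ((3:Fin 6):ℝ) = 3 by norm_num [show (3:Fin 6).val = 3 from rfl]]; ring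
    rw [h, Real.cos_pi, Real.sin_pi]
    norm_num
  have e4 : q 4 = ![-a, -(Real.sqrt 3 * a)] := by
    rw [hq 4]
    have h : ((4:Fin 6):ℝ) * Real.pi / 3 = 2*Real.pi - (Real.pi - Real.pi/3) := by
      rw [show ((4:Fin 6):ℝ) = 4 by norm_num [show (4:Fin 6).val = 4 from rfl]]; ring
    rw [h, Real.cos_two_pi_sub, Real.sin_two_pi_sub, Real.cos_pi_sub, Real.sin_pi_sub,
      Real.cos_pi_div_three, Real.sin_pi_div_three]
    norm_num; constructor <;> ring
  have e5 : q 5 = ![a, -(Real.sqrt 3 * a)] := by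
    rw [hq 5]
    have h : ((5:Fin 6):ℝ) * Real.pi / 3 = 2*Real.pi - Real.pi/3 := by
      rw [show ((5:Fin 6):ℝ) = 5 by norm_num [show (5:Fin 6).val = 5 from rfl]]; ring
    rw [h, Real.cos_two_pi_sub, Real.sin_two_pi_sub, Real.cos_pi_div_three,
      Real.sin_pi_div_three]
    norm_num; constructor <;> ring
  have main : ∀ (j : Fin 6) (c d : ℝ), q j = ![c, d] → c^2 + d^2 = 4*a^2 →
      Real.sqrt 3 * a * s ≤ c*x + d*y → dist t (q j) ≤ r := by
    intro j c d hj hcd hIn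
    have hD := key_ineq r a s x y c d hr ha har hs hs0 ht hcd hIn
    rw [EuclideanSpace.dist_eq]
    have h0 : q j 0 = c := by rw [hj]; rfl
    have h1 : q j 1 = d := by rw [hj]; rfl
    calc Real.sqrt (∑ i, dist (t i) (q j i) ^ 2)
        = Real.sqrt ((x - c)^2 + (y - d)^2) := by
          rw [Fin.sum_univ_two, h0, h1, Real.dist_eq, Real.dist_eq, sq_abs, sq_abs]
      _ ≤ Real.sqrt (r^2) := Real.sqrt_le_sqrt hD
      _ = r := Real.sqrt_sq hr.le
  rcases pick a x y s ha hs hs0 with h|h|h|h|h|h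
  · exact ⟨0, main 0 (2*a) 0 e0 (by ring) h⟩
  · exact ⟨1, main 1 a (Real.sqrt 3 * a) e1 (by linear_combination a^2 * h3) h⟩
  · exact ⟨2, main 2 (-a) (Real.sqrt 3 * a) e2 (by linear_combination a^2 * h3) h⟩
  · exact ⟨3, main 3 (-(2*a)) 0 e3 (by ring) h⟩
  · exact ⟨4, main 4 (-a) (-(Real.sqrt 3 * a)) e4 (by linear_combination a^2 * h3) h⟩
  · exact ⟨5, main 5 a (-(Real.sqrt 3 * a)) e5 (by linear_combination a^2 * h3) h⟩
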